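/- Let ξ, ξ₁, ξ₂, … be i.i.d. random variables and p ∈ (0,2). If n^{-1/p} Σ_{k≤n} ξ_k converges almost surely to a finite limit, then E|ξ|^p < ∞. -/

import Mathlib

open MeasureTheory ProbabilityTheory Filter
open scoped ENNReal Topology

theorem stmt_7 {Ω : Type*} [MeasurableSpace Ω] (μ : Measure Ω) [IsProbabilityMeasure μ]
    (ξ : ℕ → Ω → ℝ) (hmeas : ∀ n, Measurable (ξ n))
    (hindep : iIndepFun ξ μ)
    (hident : ∀ n, IdentDistrib (ξ n) (ξ 0) μ μ)
    (p : ℝ) (hp0 : 0 < p) (hp2 : p < 2)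
    (hconv : ∀ᵐ ω ∂μ, ∃ L : ℝ,
      Tendsto (fun n : ℕ => (n : ℝ) ^ (-(1 / p)) * ∑ k ∈ Finset.range n, ξ k ω)
        atTop (nhds L)) :
    Integrable (fun ω => |ξ 0 ω| ^ p) μ := by
  set a : ℝ := 1 / p with ha
  have ha0 : 0 < a := by positivity
  set D : ℕ → Set ℝ := fun n => {x | ((n : ℝ) + 1) ≤ |x| ^ p} with hD
  have hDm : ∀ n, MeasurableSet (D n) :=
    fun n => measurableSet_le measurable_const (measurable_id.abs.pow_const p)
  set A : ℕ → Set Ω := fun n => ξ n ⁻¹' D n with hA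
  have hAm : ∀ n, MeasurableSet (A n) := fun n => (hDm n).preimage (hmeas n)
  have hAindep : iIndepSet A μ := by
    rw [ProbabilityTheory.iIndepSet_iff]
    intro s' f hf
    refine hindep.meas_biInter fun i hi => ?_
    have hle : MeasurableSpace.generateFrom {A i} ≤
        MeasurableSpace.comap (ξ i) inferInstance := by
      refine MeasurableSpace.generateFrom_le ?_
      rintro t ht
      rw [Set.mem_singleton_iff] at ht
      subst ht
      exact ⟨D i, hDm i, rfl⟩
    exact hle _ (hf i hi)
  -- a.e. eventually not in A n
  have hev : ∀ᵐ ω ∂μ, ∀ᶠ n in atTop, ω ∉ A n := by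
    filter_upwards [hconv] with ω hω
    obtain ⟨L, hL⟩ := hω
    have hc : Tendsto (fun n : ℕ => (((n : ℝ) + 1) / n) ^ (-a)) atTop (nhds 1) := by
      have h1 : Tendsto (fun n : ℕ => ((n : ℝ) + 1) / n) atTop (nhds 1) := by
        have : Tendsto (fun n : ℕ => 1 / (n : ℝ)) atTop (nhds 0) := tendsto_one_div_atTop_nhds_zero_nat
        have h2 : Tendsto (fun n : ℕ => 1 + 1 / (n : ℝ)) atTop (nhds (1 + 0)) :=
          tendsto_const_nhds.add this
        rw [add_zero] at h2
        refine h2.congr' ?_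
        filter_upwards [eventually_gt_atTop 0] with n hn
        have hn0 : (0 : ℝ) < n := by exact_mod_cast Nat.lt_of_lt_of_le Nat.zero_lt_one hn
        field_simp
      have hcont : ContinuousAt (fun x : ℝ => x ^ (-a)) 1 :=
        Real.continuousAt_rpow_const 1 (-a) (Or.inl one_ne_zero)
      have := hcont.tendsto.comp h1
      rw [Real.one_rpow] at this
      exact this
    have hS1 : Tendsto (fun n : ℕ =>
        ((n : ℝ) + 1) ^ (-a) * ∑ k ∈ Finset.range (n + 1), ξ k ω) atTop (nhds L) := by
      have := hL.comp (tendsto_add_atTop_nat 1)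
      refine this.congr fun n => ?_
      simp only [Function.comp_apply, Nat.cast_add, Nat.cast_one]
    have hS2 : Tendsto (fun n : ℕ =>
        (((n : ℝ) + 1) / n) ^ (-a) * ((n : ℝ) ^ (-a) * ∑ k ∈ Finset.range n, ξ k ω))
        atTop (nhds (1 * L)) := hc.mul hL
    have key : ∀ᶠ (n : ℕ) in atTop, ((n : ℝ) + 1) ^ (-a) * ξ n ω =
        (((n : ℝ) + 1) ^ (-a) * ∑ k ∈ Finset.range (n + 1), ξ k ω) -
        ((((n : ℝ) + 1) / n) ^ (-a) * ((n : ℝ) ^ (-a) * ∑ k ∈ Finset.range n, ξ k ω)) := by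
      filter_upwards [eventually_ge_atTop 1] with n hn
      have hn0 : (0 : ℝ) < n := by exact_mod_cast Nat.lt_of_lt_of_le Nat.zero_lt_one hn
      have hmul : (((n : ℝ) + 1) / n) ^ (-a) * (n : ℝ) ^ (-a) = ((n : ℝ) + 1) ^ (-a) := by
        rw [← Real.mul_rpow (by positivity) hn0.le]
        congr 1
        field_simp
      rw [← mul_assoc, hmul, Finset.sum_range_succ]
      ring
    have h0 : Tendsto (fun n : ℕ => ((n : ℝ) + 1) ^ (-a) * ξ n ω) atTop (nhds 0) := by
      have := hS1.sub hS2
      rw [show L - 1 * L = 0 by ring] at this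
      exact this.congr' (by filter_upwards [key] with n hn using hn.symm)
    have hsmall : ∀ᶠ (n : ℕ) in atTop, |((n : ℝ) + 1) ^ (-a) * ξ n ω - 0| < 1 :=
      h0.eventually (eventually_abs_sub_lt 0 one_pos)
    filter_upwards [hsmall] with n hn
    rw [sub_zero, abs_mul, abs_of_nonneg (Real.rpow_nonneg (by positivity) _)] at hn
    have hb : (0 : ℝ) < ((n : ℝ) + 1) ^ a := Real.rpow_pos_of_pos (by positivity) _
    have hlt : |ξ n ω| < ((n : ℝ) + 1) ^ a := by
      rw [Real.rpow_neg (by positivity)] at hn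
      have := (inv_mul_lt_iff₀ hb).mp hn
      simpa [mul_one] using this
    intro hmem
    have h1 : |ξ n ω| ^ p < (((n : ℝ) + 1) ^ a) ^ p :=
      Real.rpow_lt_rpow (abs_nonneg _) hlt hp0
    have h2 : (((n : ℝ) + 1) ^ a) ^ p = (n : ℝ) + 1 := by
      rw [← Real.rpow_mul (by positivity), ha, one_div_mul_cancel hp0.ne', Real.rpow_one]
    rw [h2] at h1
    have : ((n : ℝ) + 1) ≤ |ξ n ω| ^ p := hmem
    linarith
  -- sum of measures finite via Borel-Cantelli II
  have hsum : ∑' n, μ (A n) ≠ ∞ := by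
    intro h
    have h1 : μ (limsup A atTop) = 1 := measure_limsup_eq_one hAm hAindep h
    have h0 : μ (limsup A atTop) = 0 := by
      rw [measure_eq_zero_iff_ae_notMem]
      filter_upwards [hev] with ω hω
      rw [mem_limsup_iff_frequently_mem]
      exact fun hfreq => (hfreq.and_eventually hω).exists.elim fun n hn => hn.2 hn.1
    rw [h0] at h1
    exact zero_ne_one h1
  -- identical distribution
  have hμA : ∀ n, μ (A n) = μ (ξ 0 ⁻¹' D n) := fun n => (hident n).measure_mem_eq (hDm n)
  -- integrability
  have hgm : Measurable fun ω => |ξ 0 ω| ^ p := (hmeas 0).abs.pow_const p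
  have hnonneg : ∀ ω, 0 ≤ |ξ 0 ω| ^ p := fun ω => Real.rpow_nonneg (abs_nonneg _) _
  refine ⟨hgm.aestronglyMeasurable, ?_⟩
  rw [hasFiniteIntegral_iff_ofReal (Filter.Eventually.of_forall hnonneg)]
  set C : ℕ → Set Ω := fun n => ξ 0 ⁻¹' D n with hC
  have hCm : ∀ n, MeasurableSet (C n) := fun n => (hDm n).preimage (hmeas 0)
  calc ∫⁻ ω, ENNReal.ofReal (|ξ 0 ω| ^ p) ∂μ
      ≤ ∫⁻ ω, (1 + ∑' n, (C n).indicator (fun _ => (1 : ℝ≥0∞)) ω) ∂μ := by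
        refine lintegral_mono fun ω => ?_
        set g : ℝ := |ξ 0 ω| ^ p with hg
        have hgnn : 0 ≤ g := hnonneg ω
        set m : ℕ := ⌊g⌋₊ with hm
        have hlt : g < m + 1 := Nat.lt_floor_add_one g
        have hle : (m : ℝ) ≤ g := Nat.floor_le hgnn
        have step1 : ENNReal.ofReal g ≤ (m : ℝ≥0∞) + 1 := by
          refine le_trans (ENNReal.ofReal_le_ofReal hlt.le) ?_
          rw [show ((m : ℝ) + 1) = ((m + 1 : ℕ) : ℝ) by push_cast; ring,
            ENNReal.ofReal_natCast]
          push_cast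
          ring_nf
          exact le_refl _
        refine step1.trans ?_
        rw [add_comm (1 : ℝ≥0∞)]
        refine add_le_add ?_ le_rfl
        have hterm : ∀ n ∈ Finset.range m, (C n).indicator (fun _ => (1 : ℝ≥0∞)) ω = 1 := by
          intro n hn
          rw [Finset.mem_range] at hn
          have hmem : ω ∈ C n := by
            show ((n : ℝ) + 1) ≤ |ξ 0 ω| ^ p
            have h' : (n : ℝ) + 1 ≤ (m : ℝ) := by exact_mod_cast Nat.succ_le_of_lt hn
            linarith
          simp [Set.indicator_of_mem hmem]
        have hsumeq : ∑ n ∈ Finset.range m, (C n).indicator (fun _ => (1 : ℝ≥0∞)) ω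
            = (m : ℝ≥0∞) := by
          rw [Finset.sum_congr rfl hterm, Finset.sum_const, Finset.card_range, nsmul_eq_mul,
            mul_one]
        rw [← hsumeq]
        exact ENNReal.sum_le_tsum _
    _ = 1 + ∑' n, μ (C n) := by
        rw [lintegral_add_left measurable_const]
        rw [lintegral_one, measure_univ, lintegral_tsum
          (fun n => ((measurable_const.indicator (hCm n)).aemeasurable))]
        congr 1
        exact tsum_congr fun n => lintegral_indicator_one (hCm n)
    _ < ⊤ := by
        rw [ENNReal.add_lt_top]
        refine ⟨ENNReal.one_lt_top, ?_⟩
        have : ∑' n, μ (C n) = ∑' n, μ (A n) := tsum_congr fun n => (hμA n).symm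
        rw [this]
        exact lt_of_le_of_ne le_top hsum
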